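/- Let S be a semilattice in a free abelian group Λ of finite rank and let σ ∈ S. Then Σ(S + σ) = Σ(S), i.e., the set of saturated elements is invariant under translation by elements of S. -/
import Mathlib


/-- The set of saturated elements of a subset `S` of an additive group. -/
def saturated {Λ : Type*} [AddCommGroup Λ] (S : Set Λ) : Set Λ :=
  {γ ∈ S | ∀ σ ∈ S, γ + σ ∈ S}

theorem stmt_7 (Λ : Type*) [AddCommGroup Λ] [Module.Free ℤ Λ] [Module.Finite ℤ Λ]
    (S : Set Λ) (h0 : (0 : Λ) ∈ S)
    (hsub : ∀ σ ∈ S, ∀ σ' ∈ S, σ - 2 • σ' ∈ S)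
    (hgen : AddSubgroup.closure S = ⊤)
    (σ : Λ) (hσ : σ ∈ S) :
    saturated ((fun x => x + σ) '' S) = saturated S := by
  have hneg : -σ ∈ S := by
    have := hsub σ hσ σ hσ
    simpa [two_smul] using this
  have h2σ : σ + σ ∈ S := by
    have := hsub 0 h0 (-σ) hneg
    simpa [two_smul] using this
  ext γ
  simp only [saturated, Set.mem_setOf_eq, Set.mem_image]
  constructor
  · rintro ⟨⟨s₀, hs₀, hs₀eq⟩, hsat⟩
    have key : ∀ s ∈ S, γ + s ∈ S := by
      intro s hs
      obtain ⟨t, ht, hteq⟩ := hsat (s + σ) ⟨s, hs, rfl⟩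
      have : t = γ + s := by
        have : t + σ = (γ + s) + σ := by rw [hteq]; abel
        exact add_right_cancel this
      rwa [← this]
    refine ⟨?_, key⟩
    have := hsub (γ + (σ + σ)) (key _ h2σ) σ hσ
    simpa [two_smul, add_assoc] using this
  · rintro ⟨hγ, hsat⟩
    constructor
    · have := hsub (γ + σ) (hsat σ hσ) σ hσ
      refine ⟨γ + σ - 2 • σ, this, ?_⟩
      simp [two_smul]
    · rintro τ ⟨s, hs, rfl⟩
      exact ⟨γ + s, hsat s hs, by abel⟩
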